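/- For all real p with 0 < p ≤ 1 and all natural numbers n ≥ 1 and N ≥ 1, the stale-entry survival sum S(n, N, p) = Σ_{i=1}^{n} (1 − p)^{⌊(n − i)/N⌋} satisfies S(n, N, p) ≤ N + (1 − p) · n. -/

import Mathlib

/-- For all real `p` with `0 < p ≤ 1` and all natural numbers `n ≥ 1`, `N ≥ 1`,
the stale-entry survival sum `S(n, N, p) = ∑_{i=1}^{n} (1 - p) ^ ⌊(n - i)/N⌋`
satisfies `S(n, N, p) ≤ N + (1 - p) · n`. -/
theorem sleepgate_survival_sum_le_add
    (p : ℝ) (hp0 : 0 < p) (hp1 : p ≤ 1) (n N : ℕ) (hn : 1 ≤ n) (hN : 1 ≤ N) :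
    ∑ i ∈ Finset.Icc 1 n, (1 - p) ^ ((n - i) / N) ≤ (N : ℝ) + (1 - p) * n := by
  classical
  have h0 : (0:ℝ) ≤ 1 - p := by linarith
  have h1 : (1:ℝ) - p ≤ 1 := by linarith
  rw [← Finset.sum_filter_add_sum_filter_not (Finset.Icc 1 n) (fun i => n - i < N)]
  have hA : ∑ i ∈ (Finset.Icc 1 n).filter (fun i => n - i < N),
      (1 - p) ^ ((n - i) / N) ≤ (N : ℝ) := by
    calc ∑ i ∈ (Finset.Icc 1 n).filter (fun i => n - i < N), (1 - p) ^ ((n - i) / N)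
        ≤ ∑ _i ∈ (Finset.Icc 1 n).filter (fun i => n - i < N), (1:ℝ) :=
          Finset.sum_le_sum fun i _ => pow_le_one₀ h0 h1
      _ = ((Finset.Icc 1 n).filter (fun i => n - i < N)).card := by simp
      _ ≤ (N : ℝ) := by
          have hsub : (Finset.Icc 1 n).filter (fun i => n - i < N) ⊆
              Finset.Ioc (n - N) n := by
            intro i hi
            simp only [Finset.mem_filter, Finset.mem_Icc] at hi
            simp only [Finset.mem_Ioc]
            omega
          have := Finset.card_le_card hsub
          rw [Nat.card_Ioc] at this
          have : ((Finset.Icc 1 n).filter (fun i => n - i < N)).card ≤ N := by omega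
          exact_mod_cast this
  have hB : ∑ i ∈ (Finset.Icc 1 n).filter (fun i => ¬ n - i < N),
      (1 - p) ^ ((n - i) / N) ≤ (1 - p) * n := by
    calc ∑ i ∈ (Finset.Icc 1 n).filter (fun i => ¬ n - i < N), (1 - p) ^ ((n - i) / N)
        ≤ ∑ _i ∈ (Finset.Icc 1 n).filter (fun i => ¬ n - i < N), (1 - p) := by
          apply Finset.sum_le_sum
          intro i hi
          simp only [Finset.mem_filter, Finset.mem_Icc, not_lt] at hi
          have hexp : 1 ≤ (n - i) / N := Nat.one_le_div_iff (by omega) |>.2 hi.2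
          calc (1 - p) ^ ((n - i) / N) ≤ (1 - p) ^ 1 :=
                pow_le_pow_of_le_one h0 h1 hexp
            _ = 1 - p := pow_one _
      _ = ((Finset.Icc 1 n).filter (fun i => ¬ n - i < N)).card * (1 - p) := by
          simp [mul_comm]
          ring
      _ ≤ (n : ℝ) * (1 - p) := by
          apply mul_le_mul_of_nonneg_right _ h0
          have : ((Finset.Icc 1 n).filter (fun i => ¬ n - i < N)).card ≤ n := by
            calc _ ≤ (Finset.Icc 1 n).card := Finset.card_filter_le _ _
              _ = n := by rw [Nat.card_Icc]; omega
          exact_mod_cast this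
      _ = (1 - p) * n := mul_comm _ _
  linarith
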